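/- Let m ≥ 1, and let 𝔥₀(ℳ_m) be the set of complex (2m+1)×(2m+1) matrices X such that XᵗB + BX = 0 for every skew-symmetric matrix B in the pencil ℳ_m (the Kronecker block with minimal index m). Then every element of 𝔥₀(ℳ_m) has the block form [[xE_{m+1}, Y],[0, -xE_m]] with x ∈ ℂ and Y an (m+1)×m matrix with constant entries along each diagonal (Y_{ij} = Y_{i+1,j+1}). In particular, 𝔥₀(ℳ_m) is a Lie subalgebra of 𝔤𝔩(2m+1,ℂ) containing a nilpotent element of rank 1. -/
import Mathlib


open Module LinearMap Matrix

private lemma sum_rowA {m d : ℕ} {A : Matrix (Fin (m+1)) (Fin m) ℂ}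
    (hA : ∀ i j, A i j = if (i : ℕ) + (j : ℕ) = d then 1 else 0)
    (f : Fin m → ℂ) (i : Fin (m+1)) (j : Fin m) (h : (i:ℕ) + (j:ℕ) = d) :
    ∑ j', A i j' * f j' = f j := by
  rw [Finset.sum_eq_single j]
  · rw [hA, if_pos h, one_mul]
  · intro b _ hb
    rw [hA, if_neg (fun hc => hb (Fin.ext (by omega))), zero_mul]
  · intro hj; exact absurd (Finset.mem_univ j) hj

private lemma sum_rowA_zero {m d : ℕ} {A : Matrix (Fin (m+1)) (Fin m) ℂ}
    (hA : ∀ i j, A i j = if (i : ℕ) + (j : ℕ) = d then 1 else 0)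
    (f : Fin m → ℂ) (i : Fin (m+1)) (h : ∀ j : Fin m, (i:ℕ) + (j:ℕ) ≠ d) :
    ∑ j', A i j' * f j' = 0 := by
  apply Finset.sum_eq_zero
  intro b _
  rw [hA, if_neg (h b), zero_mul]

private lemma sum_rowA' {m d : ℕ} {A : Matrix (Fin (m+1)) (Fin m) ℂ}
    (hA : ∀ i j, A i j = if (i : ℕ) + (j : ℕ) = d then 1 else 0)
    (f : Fin m → ℂ) (i : Fin (m+1)) (j : Fin m) (h : (i:ℕ) + (j:ℕ) = d) :
    ∑ j', f j' * A i j' = f j := by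
  rw [← sum_rowA hA f i j h]
  exact Finset.sum_congr rfl fun x _ => mul_comm _ _

private lemma sum_rowA'_zero {m d : ℕ} {A : Matrix (Fin (m+1)) (Fin m) ℂ}
    (hA : ∀ i j, A i j = if (i : ℕ) + (j : ℕ) = d then 1 else 0)
    (f : Fin m → ℂ) (i : Fin (m+1)) (h : ∀ j : Fin m, (i:ℕ) + (j:ℕ) ≠ d) :
    ∑ j', f j' * A i j' = 0 := by
  rw [← sum_rowA_zero hA f i h]
  exact Finset.sum_congr rfl fun x _ => mul_comm _ _

private lemma sum_colA {m d : ℕ} {A : Matrix (Fin (m+1)) (Fin m) ℂ}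
    (hA : ∀ i j, A i j = if (i : ℕ) + (j : ℕ) = d then 1 else 0)
    (f : Fin (m+1) → ℂ) (j : Fin m) (i : Fin (m+1)) (h : (i:ℕ) + (j:ℕ) = d) :
    ∑ i', A i' j * f i' = f i := by
  rw [Finset.sum_eq_single i]
  · rw [hA, if_pos h, one_mul]
  · intro b _ hb
    rw [hA, if_neg (fun hc => hb (Fin.ext (by omega))), zero_mul]
  · intro hj; exact absurd (Finset.mem_univ i) hj

private lemma sum_colA' {m d : ℕ} {A : Matrix (Fin (m+1)) (Fin m) ℂ}
    (hA : ∀ i j, A i j = if (i : ℕ) + (j : ℕ) = d then 1 else 0)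
    (f : Fin (m+1) → ℂ) (j : Fin m) (i : Fin (m+1)) (h : (i:ℕ) + (j:ℕ) = d) :
    ∑ i', f i' * A i' j = f i := by
  rw [← sum_colA hA f j i h]
  exact Finset.sum_congr rfl fun x _ => mul_comm _ _

/-- extraction of the three independent block equations -/
private lemma extract {m : ℕ} (A : Matrix (Fin (m+1)) (Fin m) ℂ)
    (X : Matrix (Fin (m+1) ⊕ Fin m) (Fin (m+1) ⊕ Fin m) ℂ)
    (hX : Xᵀ * (Matrix.fromBlocks 0 A (-Aᵀ) 0) + (Matrix.fromBlocks 0 A (-Aᵀ) 0) * X = 0) :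
    (∀ i i' : Fin (m+1), ∑ j, X (Sum.inr j) (Sum.inl i) * A i' j
        = ∑ j, A i j * X (Sum.inr j) (Sum.inl i'))
  ∧ (∀ (i : Fin (m+1)) (j : Fin m), (∑ i', X (Sum.inl i') (Sum.inl i) * A i' j)
        + ∑ j', A i j' * X (Sum.inr j') (Sum.inr j) = 0)
  ∧ (∀ j j' : Fin m, ∑ i, X (Sum.inl i) (Sum.inr j) * A i j'
        = ∑ i, A i j * X (Sum.inl i) (Sum.inr j')) := by
  refine ⟨fun i i' => ?_, fun i j => ?_, fun j j' => ?_⟩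
  · have h := congrFun (congrFun hX (Sum.inl i)) (Sum.inl i')
    simp only [Matrix.add_apply, Matrix.mul_apply, Matrix.transpose_apply, Fintype.sum_sum_type,
      Matrix.fromBlocks_apply₁₁, Matrix.fromBlocks_apply₁₂, Matrix.fromBlocks_apply₂₁,
      Matrix.fromBlocks_apply₂₂, Matrix.zero_apply, Matrix.neg_apply, mul_zero, zero_mul,
      Finset.sum_const_zero, zero_add, add_zero, mul_neg, neg_mul, Finset.sum_neg_distrib] at h
    linear_combination -h
  · have h := congrFun (congrFun hX (Sum.inl i)) (Sum.inr j)
    simp only [Matrix.add_apply, Matrix.mul_apply, Matrix.transpose_apply, Fintype.sum_sum_type,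
      Matrix.fromBlocks_apply₁₁, Matrix.fromBlocks_apply₁₂, Matrix.fromBlocks_apply₂₁,
      Matrix.fromBlocks_apply₂₂, Matrix.zero_apply, Matrix.neg_apply, mul_zero, zero_mul,
      Finset.sum_const_zero, zero_add, add_zero, mul_neg, neg_mul, Finset.sum_neg_distrib] at h
    linear_combination h
  · have h := congrFun (congrFun hX (Sum.inr j)) (Sum.inr j')
    simp only [Matrix.add_apply, Matrix.mul_apply, Matrix.transpose_apply, Fintype.sum_sum_type,
      Matrix.fromBlocks_apply₁₁, Matrix.fromBlocks_apply₁₂, Matrix.fromBlocks_apply₂₁,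
      Matrix.fromBlocks_apply₂₂, Matrix.zero_apply, Matrix.neg_apply, mul_zero, zero_mul,
      Finset.sum_const_zero, zero_add, add_zero, mul_neg, neg_mul, Finset.sum_neg_distrib] at h
    linear_combination h

private lemma part1 {m : ℕ} (hm : 1 ≤ m)
    {Al Am : Matrix (Fin (m + 1)) (Fin m) ℂ}
    (hAl : ∀ i j, Al i j = if (i : ℕ) + (j : ℕ) = m - 1 then 1 else 0)
    (hAm : ∀ i j, Am i j = if (i : ℕ) + (j : ℕ) = m then 1 else 0)
    (X : Matrix (Fin (m + 1) ⊕ Fin m) (Fin (m + 1) ⊕ Fin m) ℂ)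
    (h1 : Xᵀ * (Matrix.fromBlocks 0 Al (-Alᵀ) 0) + (Matrix.fromBlocks 0 Al (-Alᵀ) 0) * X = 0)
    (h2 : Xᵀ * (Matrix.fromBlocks 0 Am (-Amᵀ) 0) + (Matrix.fromBlocks 0 Am (-Amᵀ) 0) * X = 0) :
    ∃ (x : ℂ) (Y : Matrix (Fin (m + 1)) (Fin m) ℂ),
      (∀ (i : Fin (m + 1)) (j : Fin m)
          (hi : (i : ℕ) + 1 < m + 1) (hj : (j : ℕ) + 1 < m),
        Y ⟨(i : ℕ) + 1, hi⟩ ⟨(j : ℕ) + 1, hj⟩ = Y i j) ∧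
      X = Matrix.fromBlocks (x • 1) Y 0 ((-x) • 1) := by
  obtain ⟨lll, lrl, rrl⟩ := extract Al X h1
  obtain ⟨llm, lrm, rrm⟩ := extract Am X h2
  -- relational evaluated equations
  have q4l : ∀ (j j' : Fin m) (a a' : Fin (m+1)), (a:ℕ)+(j':ℕ) = m-1 → (a':ℕ)+(j:ℕ) = m-1 →
      X (Sum.inl a) (Sum.inr j) = X (Sum.inl a') (Sum.inr j') := by
    intro j j' a a' ha ha'
    have h := rrl j j'
    rw [sum_colA' hAl _ j' a ha, sum_colA hAl _ j a' ha'] at h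
    exact h
  have q4m : ∀ (j j' : Fin m) (a a' : Fin (m+1)), (a:ℕ)+(j':ℕ) = m → (a':ℕ)+(j:ℕ) = m →
      X (Sum.inl a) (Sum.inr j) = X (Sum.inl a') (Sum.inr j') := by
    intro j j' a a' ha ha'
    have h := rrm j j'
    rw [sum_colA' hAm _ j' a ha, sum_colA hAm _ j a' ha'] at h
    exact h
  have p2l : ∀ (i a : Fin (m+1)) (j b : Fin m), (a:ℕ)+(j:ℕ) = m-1 → (i:ℕ)+(b:ℕ) = m-1 →
      X (Sum.inl a) (Sum.inl i) + X (Sum.inr b) (Sum.inr j) = 0 := by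
    intro i a j b ha hb
    have h := lrl i j
    rw [sum_colA' hAl _ j a ha, sum_rowA hAl _ i b hb] at h
    exact h
  have p2l0 : ∀ (i a : Fin (m+1)) (j : Fin m), (a:ℕ)+(j:ℕ) = m-1 → (i:ℕ) = m →
      X (Sum.inl a) (Sum.inl i) = 0 := by
    intro i a j ha hi
    have h := lrl i j
    rw [sum_colA' hAl _ j a ha, sum_rowA_zero hAl _ i (fun b => by omega)] at h
    linear_combination h
  have p2m : ∀ (i a : Fin (m+1)) (j b : Fin m), (a:ℕ)+(j:ℕ) = m → (i:ℕ)+(b:ℕ) = m →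
      X (Sum.inl a) (Sum.inl i) + X (Sum.inr b) (Sum.inr j) = 0 := by
    intro i a j b ha hb
    have h := lrm i j
    rw [sum_colA' hAm _ j a ha, sum_rowA hAm _ i b hb] at h
    exact h
  have p2m0 : ∀ (i a : Fin (m+1)) (j : Fin m), (a:ℕ)+(j:ℕ) = m → (i:ℕ) = 0 →
      X (Sum.inl a) (Sum.inl i) = 0 := by
    intro i a j ha hi
    have h := lrm i j
    rw [sum_colA' hAm _ j a ha,
      sum_rowA_zero hAm _ i (fun b => by have := b.isLt; omega)] at h
    linear_combination h
  have r1l : ∀ (i i' : Fin (m+1)) (b b' : Fin m), (i':ℕ)+(b':ℕ) = m-1 → (i:ℕ)+(b:ℕ) = m-1 →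
      X (Sum.inr b') (Sum.inl i) = X (Sum.inr b) (Sum.inl i') := by
    intro i i' b b' h' h
    have hh := lll i i'
    rw [sum_rowA' hAl _ i' b' h', sum_rowA hAl _ i b h] at hh
    exact hh
  have rl0 : ∀ (i i' : Fin (m+1)) (b' : Fin m), (i':ℕ)+(b':ℕ) = m-1 → (i:ℕ) = m →
      X (Sum.inr b') (Sum.inl i) = 0 := by
    intro i i' b' h' hi
    have hh := lll i i'
    rw [sum_rowA' hAl _ i' b' h', sum_rowA_zero hAl _ i (fun b => by omega)] at hh
    exact hh
  have r1m : ∀ (i i' : Fin (m+1)) (b b' : Fin m), (i':ℕ)+(b':ℕ) = m → (i:ℕ)+(b:ℕ) = m →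
      X (Sum.inr b') (Sum.inl i) = X (Sum.inr b) (Sum.inl i') := by
    intro i i' b b' h' h
    have hh := llm i i'
    rw [sum_rowA' hAm _ i' b' h', sum_rowA hAm _ i b h] at hh
    exact hh
  have rm0 : ∀ (i i' : Fin (m+1)) (b' : Fin m), (i':ℕ)+(b':ℕ) = m → (i:ℕ) = 0 →
      X (Sum.inr b') (Sum.inl i) = 0 := by
    intro i i' b' h' hi
    have hh := llm i i'
    rw [sum_rowA' hAm _ i' b' h',
      sum_rowA_zero hAm _ i (fun b => by have := b.isLt; omega)] at hh
    exact hh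
  -- T block: shift invariance along diagonals
  have tshift : ∀ (b c : ℕ) (hb1 : b + 1 < m) (hc1 : c + 1 < m),
      X (Sum.inr ⟨b+1, hb1⟩) (Sum.inr ⟨c+1, hc1⟩)
        = X (Sum.inr ⟨b, Nat.lt_of_succ_lt hb1⟩) (Sum.inr ⟨c, Nat.lt_of_succ_lt hc1⟩) := by
    intro b c hb1 hc1
    have e1 := p2l ⟨m-1-b, by omega⟩ ⟨m-1-c, by omega⟩ ⟨c, by omega⟩ ⟨b, by omega⟩
      (by simp only [Fin.val_mk]; omega) (by simp only [Fin.val_mk]; omega)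
    have e2 := p2m ⟨m-1-b, by omega⟩ ⟨m-1-c, by omega⟩ ⟨c+1, by omega⟩ ⟨b+1, by omega⟩
      (by simp only [Fin.val_mk]; omega) (by simp only [Fin.val_mk]; omega)
    linear_combination e2 - e1
  have tdshift : ∀ (k b c : ℕ) (hb : b < m) (hc : c < m), k ≤ b → k ≤ c →
      X (Sum.inr ⟨b, hb⟩) (Sum.inr ⟨c, hc⟩)
        = X (Sum.inr ⟨b-k, Nat.lt_of_le_of_lt (Nat.sub_le _ _) hb⟩)
            (Sum.inr ⟨c-k, Nat.lt_of_le_of_lt (Nat.sub_le _ _) hc⟩) := by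
    intro k
    induction k with
    | zero =>
      intro b c hb hc _ _
      rw [show (⟨b-0, Nat.lt_of_le_of_lt (Nat.sub_le _ _) hb⟩ : Fin m) = ⟨b, hb⟩
            from Fin.mk_eq_mk.mpr (by omega),
          show (⟨c-0, Nat.lt_of_le_of_lt (Nat.sub_le _ _) hc⟩ : Fin m) = ⟨c, hc⟩
            from Fin.mk_eq_mk.mpr (by omega)]
    | succ k ih =>
      intro b c hb hc hkb hkc
      rw [ih b c hb hc (by omega) (by omega)]
      have e := tshift (b-(k+1)) (c-(k+1)) (by omega) (by omega)
      rw [show (⟨b-(k+1)+1, by omega⟩ : Fin m) = ⟨b-k, by omega⟩ from Fin.mk_eq_mk.mpr (by omega),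
          show (⟨c-(k+1)+1, by omega⟩ : Fin m) = ⟨c-k, by omega⟩
            from Fin.mk_eq_mk.mpr (by omega)] at e
      rw [show (⟨b-k, Nat.lt_of_le_of_lt (Nat.sub_le _ _) hb⟩ : Fin m) = ⟨b-k, by omega⟩
            from Fin.mk_eq_mk.mpr rfl,
          show (⟨c-k, Nat.lt_of_le_of_lt (Nat.sub_le _ _) hc⟩ : Fin m) = ⟨c-k, by omega⟩
            from Fin.mk_eq_mk.mpr rfl]
      rw [e]
  have trow0 : ∀ (c : ℕ) (hc : c < m), 1 ≤ c → X (Sum.inr ⟨0, hm⟩) (Sum.inr ⟨c, hc⟩) = 0 := by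
    intro c hc hc1
    have e1 := p2m ⟨m, by omega⟩ ⟨m-c, by omega⟩ ⟨c, hc⟩ ⟨0, hm⟩
      (by simp only [Fin.val_mk]; omega) (by simp only [Fin.val_mk]; omega)
    have e2 := p2l0 ⟨m, by omega⟩ ⟨m-c, by omega⟩ ⟨c-1, by omega⟩
      (by simp only [Fin.val_mk]; omega) (by simp only [Fin.val_mk])
    linear_combination e1 - e2
  have tlast0 : ∀ (c : ℕ) (hc : c < m), c < m - 1 →
      X (Sum.inr ⟨m-1, by omega⟩) (Sum.inr ⟨c, hc⟩) = 0 := by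
    intro c hc hc1
    have e1 := p2l ⟨0, by omega⟩ ⟨m-1-c, by omega⟩ ⟨c, hc⟩ ⟨m-1, by omega⟩
      (by simp only [Fin.val_mk]; omega) (by simp only [Fin.val_mk]; omega)
    have e2 := p2m0 ⟨0, by omega⟩ ⟨m-1-c, by omega⟩ ⟨c+1, by omega⟩
      (by simp only [Fin.val_mk]; omega) (by simp only [Fin.val_mk])
    linear_combination e1 - e2
  have tval : ∀ (b c : ℕ) (hb : b < m) (hc : c < m),
      X (Sum.inr ⟨b, hb⟩) (Sum.inr ⟨c, hc⟩)
        = if b = c then X (Sum.inr ⟨0, hm⟩) (Sum.inr ⟨0, hm⟩) else 0 := by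
    intro b c hb hc
    rcases lt_trichotomy b c with hlt | heq | hgt
    · rw [if_neg (by omega)]
      rw [tdshift b b c hb hc (le_refl _) (by omega),
        show (⟨b-b, Nat.lt_of_le_of_lt (Nat.sub_le _ _) hb⟩ : Fin m) = ⟨0, hm⟩
          from Fin.mk_eq_mk.mpr (by omega)]
      exact trow0 _ _ (by omega)
    · rw [if_pos heq]
      rw [tdshift b b c hb hc (le_refl _) (by omega)]
      rw [show (⟨b-b, Nat.lt_of_le_of_lt (Nat.sub_le _ _) hb⟩ : Fin m) = ⟨0, hm⟩
            from Fin.mk_eq_mk.mpr (by omega),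
          show (⟨c-b, Nat.lt_of_le_of_lt (Nat.sub_le _ _) hc⟩ : Fin m) = ⟨0, hm⟩
            from Fin.mk_eq_mk.mpr (by omega)]
    · rw [if_neg (by omega)]
      have e := tdshift (m-1-(b-c)) (m-1) (m-1-(b-c)) (by omega) (by omega) (by omega) (by omega)
      rw [show (⟨m-1-(m-1-(b-c)), Nat.lt_of_le_of_lt (Nat.sub_le _ _) (by omega : m-1 < m)⟩ : Fin m)
            = ⟨b-c, by omega⟩ from Fin.mk_eq_mk.mpr (by omega),
          show (⟨m-1-(b-c)-(m-1-(b-c)),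
              Nat.lt_of_le_of_lt (Nat.sub_le _ _) (by omega : m-1-(b-c) < m)⟩ : Fin m)
            = ⟨0, hm⟩ from Fin.mk_eq_mk.mpr (by omega)] at e
      rw [tdshift c b c hb hc (by omega) (le_refl _),
          show (⟨b-c, Nat.lt_of_le_of_lt (Nat.sub_le _ _) hb⟩ : Fin m) = ⟨b-c, by omega⟩
            from Fin.mk_eq_mk.mpr rfl,
          show (⟨c-c, Nat.lt_of_le_of_lt (Nat.sub_le _ _) hc⟩ : Fin m) = ⟨0, hm⟩
            from Fin.mk_eq_mk.mpr (by omega), ← e]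
      exact tlast0 _ _ (by omega)
  -- P block
  have pval : ∀ (a i : ℕ) (ha : a < m+1) (hi : i < m+1),
      X (Sum.inl ⟨a, ha⟩) (Sum.inl ⟨i, hi⟩)
        = if a = i then -X (Sum.inr ⟨0, hm⟩) (Sum.inr ⟨0, hm⟩) else 0 := by
    intro a i ha hi
    by_cases ham : a = m
    · by_cases hi0 : i = 0
      · rw [if_neg (by omega)]
        exact p2m0 ⟨i, hi⟩ ⟨a, ha⟩ ⟨0, hm⟩ (by simp only [Fin.val_mk]; omega)
          (by simp only [Fin.val_mk]; omega)
      · have e := p2m ⟨i, hi⟩ ⟨a, ha⟩ ⟨0, hm⟩ ⟨m-i, by omega⟩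
          (by simp only [Fin.val_mk]; omega) (by simp only [Fin.val_mk]; omega)
        rw [tval] at e
        split_ifs at e with h
        · rw [if_pos (by omega)]
          linear_combination e
        · rw [if_neg (by omega)]
          linear_combination e
    · by_cases him : i = m
      · rw [if_neg (by omega)]
        exact p2l0 ⟨i, hi⟩ ⟨a, ha⟩ ⟨m-1-a, by omega⟩ (by simp only [Fin.val_mk]; omega)
          (by simp only [Fin.val_mk]; omega)
      · have e := p2l ⟨i, hi⟩ ⟨a, ha⟩ ⟨m-1-a, by omega⟩ ⟨m-1-i, by omega⟩
          (by simp only [Fin.val_mk]; omega) (by simp only [Fin.val_mk]; omega)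
        rw [tval] at e
        split_ifs at e with h
        · rw [if_pos (by omega)]
          linear_combination e
        · rw [if_neg (by omega)]
          linear_combination e
  -- R block
  have rshift : ∀ (u v : ℕ) (hu1 : u + 1 < m) (hv1 : v + 1 < m + 1),
      X (Sum.inr ⟨u+1, hu1⟩) (Sum.inl ⟨v+1, hv1⟩)
        = X (Sum.inr ⟨u, Nat.lt_of_succ_lt hu1⟩) (Sum.inl ⟨v, Nat.lt_of_succ_lt hv1⟩) := by
    intro u v hu1 hv1
    have e1 := r1l ⟨v, by omega⟩ ⟨m-1-u, by omega⟩ ⟨m-1-v, by omega⟩ ⟨u, by omega⟩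
      (by simp only [Fin.val_mk]; omega) (by simp only [Fin.val_mk]; omega)
    have e2 := r1m ⟨m-1-u, by omega⟩ ⟨v+1, by omega⟩ ⟨u+1, by omega⟩ ⟨m-1-v, by omega⟩
      (by simp only [Fin.val_mk]; omega) (by simp only [Fin.val_mk]; omega)
    rw [show (⟨v+1, by omega⟩ : Fin (m+1)) = ⟨v+1, hv1⟩ from Fin.mk_eq_mk.mpr rfl,
        show (⟨u+1, by omega⟩ : Fin m) = ⟨u+1, hu1⟩ from Fin.mk_eq_mk.mpr rfl] at e2
    rw [← e2, ← e1]
  have rdshift : ∀ (k u v : ℕ) (hu : u < m) (hv : v < m + 1), k ≤ u → k ≤ v →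
      X (Sum.inr ⟨u, hu⟩) (Sum.inl ⟨v, hv⟩)
        = X (Sum.inr ⟨u-k, Nat.lt_of_le_of_lt (Nat.sub_le _ _) hu⟩)
            (Sum.inl ⟨v-k, Nat.lt_of_le_of_lt (Nat.sub_le _ _) hv⟩) := by
    intro k
    induction k with
    | zero =>
      intro u v hu hv _ _
      rw [show (⟨u-0, Nat.lt_of_le_of_lt (Nat.sub_le _ _) hu⟩ : Fin m) = ⟨u, hu⟩
            from Fin.mk_eq_mk.mpr (by omega),
          show (⟨v-0, Nat.lt_of_le_of_lt (Nat.sub_le _ _) hv⟩ : Fin (m+1)) = ⟨v, hv⟩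
            from Fin.mk_eq_mk.mpr (by omega)]
    | succ k ih =>
      intro u v hu hv hku hkv
      rw [ih u v hu hv (by omega) (by omega)]
      have e := rshift (u-(k+1)) (v-(k+1)) (by omega) (by omega)
      rw [show (⟨u-(k+1)+1, by omega⟩ : Fin m) = ⟨u-k, Nat.lt_of_le_of_lt (Nat.sub_le _ _) hu⟩
            from Fin.mk_eq_mk.mpr (by omega),
          show (⟨v-(k+1)+1, by omega⟩ : Fin (m+1)) = ⟨v-k, Nat.lt_of_le_of_lt (Nat.sub_le _ _) hv⟩
            from Fin.mk_eq_mk.mpr (by omega)] at e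
      rw [e]
  have rval : ∀ (u v : ℕ) (hu : u < m) (hv : v < m + 1),
      X (Sum.inr ⟨u, hu⟩) (Sum.inl ⟨v, hv⟩) = 0 := by
    intro u v hu hv
    by_cases h : v ≤ u
    · rw [rdshift v u v hu hv h (le_refl _),
        show (⟨v-v, Nat.lt_of_le_of_lt (Nat.sub_le _ _) hv⟩ : Fin (m+1)) = ⟨0, by omega⟩
          from Fin.mk_eq_mk.mpr (by omega)]
      exact rm0 ⟨0, by omega⟩ ⟨m-(u-v), by omega⟩ ⟨u-v, by omega⟩
        (by simp only [Fin.val_mk]; omega) (by simp only [Fin.val_mk])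
    · have e := rdshift (m-v) (u+(m-v)) m (by omega) (by omega) (by omega) (by omega)
      rw [show (⟨u+(m-v)-(m-v), Nat.lt_of_le_of_lt (Nat.sub_le _ _) (by omega : u+(m-v) < m)⟩
              : Fin m) = ⟨u, hu⟩ from Fin.mk_eq_mk.mpr (by omega),
          show (⟨m-(m-v), Nat.lt_of_le_of_lt (Nat.sub_le _ _) (by omega : m < m+1)⟩ : Fin (m+1))
            = ⟨v, hv⟩ from Fin.mk_eq_mk.mpr (by omega)] at e
      rw [← e]
      exact rl0 ⟨m, by omega⟩ ⟨m-1-(u+(m-v)), by omega⟩ ⟨u+(m-v), by omega⟩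
        (by simp only [Fin.val_mk]; omega) (by simp only [Fin.val_mk])
  -- Y block shift
  have yshift : ∀ (i j : ℕ) (hi1 : i + 1 < m + 1) (hj1 : j + 1 < m) (hi : i < m + 1)
      (hj : j < m),
      X (Sum.inl ⟨i+1, hi1⟩) (Sum.inr ⟨j+1, hj1⟩) = X (Sum.inl ⟨i, hi⟩) (Sum.inr ⟨j, hj⟩) := by
    intro i j hi1 hj1 hi hj
    have e1 := q4l ⟨j, hj⟩ ⟨m-1-i, by omega⟩ ⟨i, hi⟩ ⟨m-1-j, by omega⟩
      (by simp only [Fin.val_mk]; omega) (by simp only [Fin.val_mk]; omega)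
    have e2 := q4m ⟨j+1, hj1⟩ ⟨m-1-i, by omega⟩ ⟨i+1, hi1⟩ ⟨m-1-j, by omega⟩
      (by simp only [Fin.val_mk]; omega) (by simp only [Fin.val_mk]; omega)
    rw [e2, e1]
  -- conclusion
  refine ⟨-X (Sum.inr ⟨0, hm⟩) (Sum.inr ⟨0, hm⟩),
    Matrix.of (fun i j => X (Sum.inl i) (Sum.inr j)),
    fun i j hi hj => yshift (i:ℕ) (j:ℕ) hi hj i.isLt j.isLt, ?_⟩
  ext a b
  rcases a with i | u <;> rcases b with i' | v
  · have e := pval (i:ℕ) (i':ℕ) i.isLt i'.isLt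
    simp only [Fin.eta] at e
    rw [Matrix.fromBlocks_apply₁₁, e]
    simp [Matrix.one_apply, Fin.val_eq_val]
  · rw [Matrix.fromBlocks_apply₁₂, Matrix.of_apply]
  · have e := rval (u:ℕ) (i':ℕ) u.isLt i'.isLt
    simp only [Fin.eta] at e
    rw [Matrix.fromBlocks_apply₂₁, e, Matrix.zero_apply]
  · have e := tval (u:ℕ) (v:ℕ) u.isLt v.isLt
    simp only [Fin.eta] at e
    rw [Matrix.fromBlocks_apply₂₂, e]
    simp [Matrix.one_apply, Fin.val_eq_val]

private lemma closure_lemma {n : Type*} [Fintype n]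
    (B X Y : Matrix n n ℂ)
    (h1 : Xᵀ * B + B * X = 0) (h2 : Yᵀ * B + B * Y = 0) :
    ((X + Y)ᵀ * B + B * (X + Y) = 0)
    ∧ (∀ c : ℂ, (c • X)ᵀ * B + B * (c • X) = 0)
    ∧ ((X * Y - Y * X)ᵀ * B + B * (X * Y - Y * X) = 0) := by
  have hx : Xᵀ * B = -(B * X) := eq_neg_of_add_eq_zero_left h1
  have hy : Yᵀ * B = -(B * Y) := eq_neg_of_add_eq_zero_left h2
  refine ⟨?_, fun c => ?_, ?_⟩
  · have : (X + Y)ᵀ * B + B * (X + Y) = (Xᵀ * B + B * X) + (Yᵀ * B + B * Y) := by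
      rw [Matrix.transpose_add]; noncomm_ring
    rw [this, h1, h2, add_zero]
  · have : (c • X)ᵀ * B + B * (c • X) = c • (Xᵀ * B + B * X) := by
      rw [Matrix.transpose_smul, smul_mul_assoc, Matrix.mul_smul, smul_add]
    rw [this, h1, smul_zero]
  · calc (X * Y - Y * X)ᵀ * B + B * (X * Y - Y * X)
        = Yᵀ * (Xᵀ * B) - Xᵀ * (Yᵀ * B) + (B * X * Y - B * Y * X) := by
          rw [Matrix.transpose_sub, Matrix.transpose_mul, Matrix.transpose_mul]; noncomm_ring
      _ = Yᵀ * (-(B * X)) - Xᵀ * (-(B * Y)) + (B * X * Y - B * Y * X) := by rw [hx, hy]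
      _ = -((Yᵀ * B) * X) + (Xᵀ * B) * Y + (B * X * Y - B * Y * X) := by noncomm_ring
      _ = -((-(B * Y)) * X) + (-(B * X)) * Y + (B * X * Y - B * Y * X) := by rw [hx, hy]
      _ = 0 := by noncomm_ring

private lemma nmem_lemma {m d : ℕ} (A : Matrix (Fin (m+1)) (Fin m) ℂ)
    (hA : ∀ i j, A i j = if (i : ℕ) + (j : ℕ) = d then 1 else 0)
    (hsolv : ∀ j : Fin m, ∃ i : Fin (m+1), (i:ℕ) + (j:ℕ) = d) :
    (Matrix.fromBlocks 0 (Matrix.of fun (_ : Fin (m+1)) (_ : Fin m) => (1:ℂ)) 0 0)ᵀ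
        * (Matrix.fromBlocks 0 A (-Aᵀ) 0)
      + (Matrix.fromBlocks 0 A (-Aᵀ) 0)
        * (Matrix.fromBlocks 0 (Matrix.of fun (_ : Fin (m+1)) (_ : Fin m) => (1:ℂ)) 0 0) = 0 := by
  rw [Matrix.fromBlocks_transpose, Matrix.fromBlocks_multiply, Matrix.fromBlocks_multiply]
  have h1 : (Matrix.of fun (_ : Fin (m+1)) (_ : Fin m) => (1:ℂ))ᵀ * A
      + (-Aᵀ) * (Matrix.of fun (_ : Fin (m+1)) (_ : Fin m) => (1:ℂ)) = 0 := by
    ext j j'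
    obtain ⟨i1, hi1⟩ := hsolv j'
    obtain ⟨i2, hi2⟩ := hsolv j
    simp only [Matrix.add_apply, Matrix.mul_apply, Matrix.transpose_apply, Matrix.neg_apply,
      Matrix.of_apply, one_mul, mul_one, Matrix.zero_apply, neg_mul, Finset.sum_neg_distrib]
    rw [show (∑ i, A i j') = ∑ i, A i j' * (fun (_ : Fin (m+1)) => (1:ℂ)) i from by simp,
      sum_colA hA _ j' i1 hi1]
    rw [show (∑ i, A i j) = ∑ i, A i j * (fun (_ : Fin (m+1)) => (1:ℂ)) i from by simp,
      sum_colA hA _ j i2 hi2]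
    ring
  simp only [Matrix.transpose_zero, Matrix.zero_mul, Matrix.mul_zero, add_zero, zero_add]
  rw [Matrix.fromBlocks_add, h1]
  simp [Matrix.fromBlocks_zero]

private lemma rank_lemma {m : ℕ} (hm : 1 ≤ m) :
    (Matrix.fromBlocks 0 (Matrix.of fun (_ : Fin (m+1)) (_ : Fin m) => (1:ℂ)) 0 0 :
      Matrix (Fin (m+1) ⊕ Fin m) (Fin (m+1) ⊕ Fin m) ℂ).rank = 1 := by
  set N : Matrix (Fin (m+1) ⊕ Fin m) (Fin (m+1) ⊕ Fin m) ℂ :=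
    Matrix.fromBlocks 0 (Matrix.of fun _ _ => (1:ℂ)) 0 0 with hN
  set u : (Fin (m+1) ⊕ Fin m) → ℂ := Sum.elim (fun _ => 1) (fun _ => 0) with hu
  have key : ∀ y, N.mulVec y = (∑ j, y (Sum.inr j)) • u := by
    intro y; funext a
    rcases a with i | j <;>
      simp [hN, hu, Matrix.mulVec, dotProduct, Fintype.sum_sum_type]
  have hun : u ≠ 0 := fun h => by
    have := congrFun h (Sum.inl ⟨0, Nat.succ_pos m⟩)
    simp [hu] at this
  have hrange : LinearMap.range N.mulVecLin = Submodule.span ℂ {u} := by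
    apply le_antisymm
    · rintro z ⟨y, rfl⟩
      rw [Matrix.mulVecLin_apply, key]
      exact Submodule.smul_mem _ _ (Submodule.mem_span_singleton_self u)
    · rw [Submodule.span_singleton_le_iff_mem]
      refine ⟨Sum.elim 0 (fun j => if j = ⟨0, hm⟩ then 1 else 0), ?_⟩
      rw [Matrix.mulVecLin_apply, key]
      simp
  rw [Matrix.rank, hrange]
  exact finrank_span_singleton hun

/-- for `m ≥ 1`, the algebra `𝔥₀(ℳ_m)` of complex
`(2m+1)×(2m+1)` matrices `X` with `Xᵀ B + B X = 0` for both skew-symmetric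
matrices `Bl, Bm` of the Kronecker pencil `ℳ_m` consists exactly of the
block matrices `[[x·E_{m+1}, Y], [0, -x·E_m]]` with `x ∈ ℂ` and `Y` constant
along diagonals; it is a Lie subalgebra of `𝔤𝔩(2m+1, ℂ)` containing a
nilpotent element of rank 1. -/
theorem stmt15 (m : ℕ) (hm : 1 ≤ m)
    (Al Am : Matrix (Fin (m + 1)) (Fin m) ℂ)
    (hAl : ∀ i j, Al i j = if (i : ℕ) + (j : ℕ) = m - 1 then 1 else 0)
    (hAm : ∀ i j, Am i j = if (i : ℕ) + (j : ℕ) = m then 1 else 0)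
    (Bl Bm : Matrix (Fin (m + 1) ⊕ Fin m) (Fin (m + 1) ⊕ Fin m) ℂ)
    (hBl : Bl = Matrix.fromBlocks 0 Al (-Alᵀ) 0)
    (hBm : Bm = Matrix.fromBlocks 0 Am (-Amᵀ) 0)
    (S : Set (Matrix (Fin (m + 1) ⊕ Fin m) (Fin (m + 1) ⊕ Fin m) ℂ))
    (hS : S = {X | Xᵀ * Bl + Bl * X = 0 ∧ Xᵀ * Bm + Bm * X = 0}) :
    -- every element of `𝔥₀(ℳ_m)` has the stated block form
    (∀ X ∈ S, ∃ (x : ℂ) (Y : Matrix (Fin (m + 1)) (Fin m) ℂ),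
      (∀ (i : Fin (m + 1)) (j : Fin m)
          (hi : (i : ℕ) + 1 < m + 1) (hj : (j : ℕ) + 1 < m),
        Y ⟨(i : ℕ) + 1, hi⟩ ⟨(j : ℕ) + 1, hj⟩ = Y i j) ∧
      X = Matrix.fromBlocks (x • 1) Y 0 ((-x) • 1)) ∧
    -- `𝔥₀(ℳ_m)` is a Lie subalgebra of `𝔤𝔩(2m+1,ℂ)`
    (∀ X ∈ S, ∀ Y ∈ S, X + Y ∈ S ∧ (∀ c : ℂ, c • X ∈ S) ∧ X * Y - Y * X ∈ S) ∧
    -- it contains a nilpotent element of rank 1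
    (∃ N ∈ S, IsNilpotent N ∧ N.rank = 1) := by
  subst hBl hBm hS
  refine ⟨?_, ?_, ?_⟩
  · intro X hX
    exact part1 hm hAl hAm X hX.1 hX.2
  · intro X hX Y hY
    obtain ⟨al1, al2, al3⟩ := closure_lemma _ X Y hX.1 hY.1
    obtain ⟨am1, am2, am3⟩ := closure_lemma _ X Y hX.2 hY.2
    exact ⟨⟨al1, am1⟩, fun c => ⟨al2 c, am2 c⟩, ⟨al3, am3⟩⟩
  · refine ⟨Matrix.fromBlocks 0 (Matrix.of fun _ _ => (1:ℂ)) 0 0,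
      ⟨nmem_lemma Al hAl (fun j => ⟨⟨m-1-(j:ℕ), by omega⟩,
          by have := j.isLt; simp only [Fin.val_mk]; omega⟩),
       nmem_lemma Am hAm (fun j => ⟨⟨m-(j:ℕ), by omega⟩,
          by have := j.isLt; simp only [Fin.val_mk]; omega⟩)⟩,
      ⟨2, by rw [pow_two, Matrix.fromBlocks_multiply]; simp [Matrix.fromBlocks_zero]⟩,
      rank_lemma hm⟩
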